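/- There are exactly 15 unconditionally valid syllogistic moods (valid without existential import) among the 256 possible mood-figure combinations. -/

import Mathlib

/-- The four categorical proposition types. -/
inductive CatType where
  | A | E | I | O
  deriving DecidableEq

instance : Fintype CatType where
  elems := {.A, .E, .I, .O}
  complete := fun x => by cases x <;> simp

/-- Interpret a categorical proposition type applied to subject `X` and predicate `Y`. -/
def CatType.interp {U : Type} (t : CatType) (X Y : U → Prop) : Prop :=
  match t with
  | .A => ∀ x, X x → Y x
  | .E => ∀ x, X x → ¬ Y x
  | .I => ∃ x, X x ∧ Y x
  | .O => ∃ x, X x ∧ ¬ Y x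

/-- A syllogistic form: a figure (1–4) together with the types of the
major premise, minor premise, and conclusion. -/
structure SyllogisticForm where
  figure : Fin 4
  major : CatType
  minor : CatType
  concl : CatType
  deriving DecidableEq, Fintype

/-- The major premise of a form, given middle term `M` and major term `P`;
the position of the middle term depends on the figure. -/
def SyllogisticForm.majorProp (f : SyllogisticForm) {U : Type} (M P : U → Prop) : Prop :=
  match f.figure with
  | 0 => f.major.interp M P
  | 1 => f.major.interp P M
  | 2 => f.major.interp M P
  | 3 => f.major.interp P M

/-- The minor premise of a form, given subject term `S` and middle term `M`. -/
def SyllogisticForm.minorProp (f : SyllogisticForm) {U : Type} (S M : U → Prop) : Prop :=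
  match f.figure with
  | 0 => f.minor.interp S M
  | 1 => f.minor.interp S M
  | 2 => f.minor.interp M S
  | 3 => f.minor.interp M S

/-- Unconditional validity (no existential import): for every universe and every
assignment of terms, the premises entail the conclusion. -/
def SyllogisticForm.Valid (f : SyllogisticForm) : Prop :=
  ∀ (U : Type) (S M P : U → Prop),
    f.majorProp M P → f.minorProp S M → f.concl.interp S P

/-- Membership of `x : Fin 3` in the subset coded by `s : Fin 8`. -/
def memb (s : Fin 8) (x : Fin 3) : Prop := Nat.testBit s.val x.val = true

instance : ∀ s x, Decidable (memb s x) := fun s x => by unfold memb; infer_instance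

def decInterp (t : CatType) (X Y : Fin 3 → Prop) [DecidablePred X] [DecidablePred Y] :
    Decidable (t.interp X Y) := by
  cases t
  · exact (inferInstance : Decidable (∀ x, X x → Y x))
  · exact (inferInstance : Decidable (∀ x, X x → ¬ Y x))
  · exact (inferInstance : Decidable (∃ x, X x ∧ Y x))
  · exact (inferInstance : Decidable (∃ x, X x ∧ ¬ Y x))

def decMajor (f : SyllogisticForm) (M P : Fin 3 → Prop) [DecidablePred M] [DecidablePred P] :
    Decidable (f.majorProp M P) := by
  obtain ⟨fig, maj, mi, co⟩ := f
  exact match fig with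
  | 0 => decInterp maj M P
  | 1 => decInterp maj P M
  | 2 => decInterp maj M P
  | 3 => decInterp maj P M

def decMinor (f : SyllogisticForm) (S M : Fin 3 → Prop) [DecidablePred S] [DecidablePred M] :
    Decidable (f.minorProp S M) := by
  obtain ⟨fig, maj, mi, co⟩ := f
  exact match fig with
  | 0 => decInterp mi S M
  | 1 => decInterp mi S M
  | 2 => decInterp mi M S
  | 3 => decInterp mi M S

/-- Validity over the 3-element universe, with subsets coded by `Fin 8`. -/
def Validb (f : SyllogisticForm) : Prop :=
  ∀ s m p : Fin 8,
    f.majorProp (memb m) (memb p) → f.minorProp (memb s) (memb m) →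
      f.concl.interp (memb s) (memb p)

instance : DecidablePred Validb := fun f => by
  haveI h1 : ∀ m p : Fin 8, Decidable (f.majorProp (memb m) (memb p)) :=
    fun m p => decMajor f _ _
  haveI h2 : ∀ s m : Fin 8, Decidable (f.minorProp (memb s) (memb m)) :=
    fun s m => decMinor f _ _
  haveI h3 : ∀ s p : Fin 8, Decidable (f.concl.interp (memb s) (memb p)) :=
    fun s p => decInterp _ _ _
  unfold Validb
  infer_instance

def validList : List SyllogisticForm :=
  [⟨0, .A, .A, .A⟩, ⟨0, .E, .A, .E⟩, ⟨0, .A, .I, .I⟩, ⟨0, .E, .I, .O⟩,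
   ⟨1, .E, .A, .E⟩, ⟨1, .A, .E, .E⟩, ⟨1, .E, .I, .O⟩, ⟨1, .A, .O, .O⟩,
   ⟨2, .I, .A, .I⟩, ⟨2, .A, .I, .I⟩, ⟨2, .O, .A, .O⟩, ⟨2, .E, .I, .O⟩,
   ⟨3, .A, .E, .E⟩, ⟨3, .I, .A, .I⟩, ⟨3, .E, .I, .O⟩]

set_option maxRecDepth 10000 in
lemma not_valid_of_not_mem : ∀ f : SyllogisticForm, f ∉ validList → ¬ Validb f := by decide

lemma valid_iff (f : SyllogisticForm) : f.Valid ↔ Validb f := by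
  constructor
  · intro h s m p
    exact h (Fin 3) (memb s) (memb m) (memb p)
  · intro h
    by_cases hmem : f ∈ validList
    · fin_cases hmem <;>
        (intro U S M P h1 h2
         simp only [SyllogisticForm.majorProp, SyllogisticForm.minorProp,
           CatType.interp] at h1 h2 ⊢
         aesop)
    · exact absurd h (not_valid_of_not_mem f hmem)

open Classical in
theorem fifteen_valid_moods :
    (Finset.univ.filter (fun f : SyllogisticForm => f.Valid)).card = 15 := by
  rw [show (Finset.univ.filter (fun f : SyllogisticForm => f.Valid))
        = Finset.univ.filter (fun f => Validb f) from
      Finset.filter_congr (fun f _ => valid_iff f)]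
  rw [Finset.filter_congr_decidable]
  decide
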